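/- Let (E,C) be an adaptable separated graph with antisymmetrization poset I = I_free ⊔ I_reg of E⁰. Define the relation ◁ on I by p ◁ q iff p < q or p = q ∈ I_reg, and let M(I,◁) be the commutative monoid with generating set I and relations q = q + p whenever p ◁ q. Then the antisymmetrization of M(E,C), i.e., the quotient of M(E,C) by the congruence x ≈ y iff x ≤ y and y ≤ x in the algebraic pre-order, is isomorphic to M(I,◁) via the map sending the class of a_v to the generator [v]. -/

import Mathlib

/-- A (finitely) separated graph `(E,C)`: a directed graph together with,
for each vertex `v`, a partition `C v` of `s⁻¹(v)` into pairwise disjoint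
nonempty finite subsets. -/
structure SepGraph where
  V : Type
  Ed : Type
  s : Ed → V
  r : Ed → V
  C : V → Set (Finset Ed)
  c_src : ∀ v : V, ∀ X ∈ C v, ∀ e ∈ X, s e = v
  c_nonempty : ∀ v : V, ∀ X ∈ C v, X.Nonempty
  c_disjoint : ∀ v : V, ∀ X ∈ C v, ∀ Y ∈ C v, X ≠ Y → Disjoint X Y
  c_cover : ∀ e : Ed, ∃ X ∈ C (s e), e ∈ X

namespace SepGraph

variable (G : SepGraph)

/-- There is an edge from `v` to `w`. -/
def Edge (v w : G.V) : Prop := ∃ e : G.Ed, G.s e = v ∧ G.r e = w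

/-- There is a directed path from `v` to `w`. -/
def Reach : G.V → G.V → Prop := Relation.ReflTransGen G.Edge

/-- Mutual reachability: `v` and `w` lie in the same component, i.e. `[v] = [w]`. -/
def VEquiv (v w : G.V) : Prop := G.Reach v w ∧ G.Reach w v

/-- `[v] ≤ [w]` in the antisymmetrization poset `I` of `E⁰`. -/
def VLe (v w : G.V) : Prop := G.Reach w v

/-- `[v] < [w]` in the antisymmetrization poset `I` of `E⁰`. -/
def VLt (v w : G.V) : Prop := G.Reach w v ∧ ¬ G.Reach v w

/-- The free commutative monoid `F` on the vertex set `E⁰`. -/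
abbrev FreeM := G.V →₀ ℕ

/-- The basis element of `F` corresponding to a vertex. -/
noncomputable def vert (v : G.V) : G.FreeM := Finsupp.single v 1

/-- `r(X) = Σ_{e ∈ X} r(e)` as an element of `F`. -/
noncomputable def rX (X : Finset G.Ed) : G.FreeM := ∑ e ∈ X, Finsupp.single (G.r e) 1

/-- The defining relations of `M(E,C)`: `a_v = Σ_{e ∈ X} a_{r(e)}` for `X ∈ C_v`. -/
def Rel : G.FreeM → G.FreeM → Prop := fun a b =>
  ∃ v : G.V, ∃ X ∈ G.C v, a = G.vert v ∧ b = G.rX X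

/-- The congruence on `F` generated by the defining relations. -/
noncomputable def mCon : AddCon G.FreeM := addConGen G.Rel

/-- The monoid `M(E,C)` of the separated graph `(E,C)`. -/
def M := G.mCon.Quotient

noncomputable instance : AddCommMonoid G.M := inferInstanceAs (AddCommMonoid G.mCon.Quotient)

/-- The generator `a_v` of `M(E,C)`. -/
noncomputable def gen (v : G.V) : G.M := G.mCon.mk' (G.vert v)

end SepGraph

/-- The data witnessing that a separated graph is *adaptable*: the
antisymmetrization `I` of `E⁰` is finite, it is partitioned into free and
regular elements (with free components reduced to a single vertex `v^p`),
and the conditions of Definition 1.6 of the paper hold.  Here, for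
`p ∈ I_reg`, the subgraph `E_p` is the restriction of `E` to the class `p`. -/
structure SepGraph.AdaptableStructure (G : SepGraph) where
  /-- the partition `I = I_free ⊔ I_reg` (a vertex is free if its class is free) -/
  free : G.V → Prop
  /-- `I` is a finite poset -/
  finite_components : Finite (Quot G.VEquiv)
  free_respects : ∀ v w : G.V, G.VEquiv v w → (free v ↔ free w)
  /-- a free component consists of a single vertex `E_p⁰ = {v^p}` -/
  free_singleton : ∀ v : G.V, free v → ∀ w : G.V, G.VEquiv w v → w = v
  /-- for free `p`, `s⁻¹(v^p) = ∅` iff `p` is minimal in `I` -/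
  free_minimal : ∀ v : G.V, free v →
    ((¬ ∃ e : G.Ed, G.s e = v) ↔ ∀ w : G.V, G.Reach v w → G.VEquiv v w)
  /-- for free non-minimal `p`, `C_{v^p} = {X₁,…,X_{k(p)}}` is a finite family -/
  free_C_finite : ∀ v : G.V, free v → (G.C v).Finite
  /-- each `X_i ∈ C_{v^p}` contains exactly one loop `α(p,i)` at `v^p` -/
  free_loop : ∀ v : G.V, free v → ∀ X ∈ G.C v, ∃! e : G.Ed, e ∈ X ∧ G.r e = v
  /-- the remaining edges `β(p,i,t)` of `X_i` end in strictly smaller components -/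
  free_targets : ∀ v : G.V, free v → ∀ X ∈ G.C v, ∀ e ∈ X, G.r e = v ∨ G.VLt (G.r e) v
  /-- `g(p,i) ≥ 1`: there is at least one connector `β(p,i,1)` in each `X_i` -/
  free_beta : ∀ v : G.V, free v → ∀ X ∈ G.C v, ∃ e ∈ X, G.r e ≠ v
  /-- for regular `p` and `w ∈ E_p⁰`, `|C_w| = 1` -/
  reg_unique_C : ∀ w : G.V, ¬ free w → ∃! X : Finset G.Ed, X ∈ G.C w
  /-- for regular `p` and `w ∈ E_p⁰`, `|s_{E_p}⁻¹(w)| ≥ 2` -/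
  reg_two_edges : ∀ w : G.V, ¬ free w → ∃ e₁ e₂ : G.Ed, e₁ ≠ e₂ ∧ G.s e₁ = w ∧ G.s e₂ = w ∧
    G.VEquiv (G.r e₁) w ∧ G.VEquiv (G.r e₂) w
  /-- every edge leaving `w ∈ E_p⁰` stays in `E_p` or goes to some `E_q⁰` with `q < p` -/
  reg_targets : ∀ w : G.V, ¬ free w → ∀ e : G.Ed, G.s e = w →
    G.VEquiv (G.r e) w ∨ G.VLt (G.r e) w

/-- The algebraic pre-order on a commutative monoid: `x ≤ y` iff `x + z = y` for some `z`. -/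
def MLe {M : Type} [AddCommMonoid M] (x y : M) : Prop := ∃ z, x + z = y

/-- A commutative monoid is conical if `x + y = 0` implies `x = y = 0`. -/
def IsConical (M : Type) [AddCommMonoid M] : Prop := ∀ x y : M, x + y = 0 → x = 0 ∧ y = 0

/-- The refinement property for a commutative monoid. -/
def IsRefinement (M : Type) [AddCommMonoid M] : Prop := ∀ a b c d : M, a + b = c + d →
  ∃ w x y z : M, a = w + x ∧ b = y + z ∧ c = w + y ∧ d = x + z

/-- `p` is a prime element: it is not invertible, and `p ≤ a + b` implies `p ≤ a` or `p ≤ b`. -/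
def IsPrimeElem {M : Type} [AddCommMonoid M] (p : M) : Prop :=
  (¬ ∃ q, p + q = 0) ∧ ∀ a b : M, MLe p (a + b) → MLe p a ∨ MLe p b

/-- A commutative monoid is primely generated if every non-invertible element is a
sum of prime elements. -/
def IsPrimelyGenerated (M : Type) [AddCommMonoid M] : Prop :=
  ∀ x : M, (¬ ∃ q, x + q = 0) → ∃ l : Multiset M, (∀ p ∈ l, IsPrimeElem p) ∧ x = l.sum

/-- The congruence `x ≈ y iff x ≤ y and y ≤ x` (in the algebraic pre-order) on a
commutative monoid; the quotient is the antisymmetrization of the monoid. -/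
def mutualCon (M : Type) [AddCommMonoid M] : AddCon M :=
  { r := fun x y => MLe x y ∧ MLe y x
    iseqv := by
      constructor
      · intro x; exact ⟨⟨0, add_zero x⟩, ⟨0, add_zero x⟩⟩
      · intro x y h; exact ⟨h.2, h.1⟩
      · rintro x y z ⟨⟨a, ha⟩, ⟨b, hb⟩⟩ ⟨⟨c, hc⟩, ⟨d, hd⟩⟩
        exact ⟨⟨a + c, by rw [← add_assoc, ha, hc]⟩, ⟨d + b, by rw [← add_assoc, hd, hb]⟩⟩
    add' := by
      rintro w x y z ⟨⟨a, ha⟩, ⟨b, hb⟩⟩ ⟨⟨c, hc⟩, ⟨d, hd⟩⟩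
      exact ⟨⟨a + c, by rw [add_add_add_comm, ha, hc]⟩,
        ⟨b + d, by rw [add_add_add_comm, hb, hd]⟩⟩ }

namespace SepGraph

/-- The antisymmetrization `I` of `E⁰` with respect to the path-way pre-order. -/
def Idx (G : SepGraph) : Type := Quot G.VEquiv

/-- The relation `◁` on `I`: `p ◁ q` iff `p < q`, or `p = q ∈ I_reg`. -/
def tri (G : SepGraph) (A : G.AdaptableStructure) : G.Idx → G.Idx → Prop := fun p q =>
  ∃ v w : G.V, p = Quot.mk G.VEquiv v ∧ q = Quot.mk G.VEquiv w ∧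
    (G.VLt v w ∨ (G.VEquiv v w ∧ ¬ A.free v))

/-- The congruence defining the monoid `M(I,◁)`, with generating set `I` and
relations `q = q + p` whenever `p ◁ q`. -/
noncomputable def triCon (G : SepGraph) (A : G.AdaptableStructure) : AddCon (G.Idx →₀ ℕ) :=
  addConGen fun a b => ∃ p q : G.Idx, G.tri A p q ∧
    a = Finsupp.single q 1 ∧ b = Finsupp.single q 1 + Finsupp.single p 1

/-- The monoid `M(I,◁)`. -/
def MIdx (G : SepGraph) (A : G.AdaptableStructure) : Type := (G.triCon A).Quotient

noncomputable instance (G : SepGraph) (A : G.AdaptableStructure) :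
    AddCommMonoid (G.MIdx A) := inferInstanceAs (AddCommMonoid (G.triCon A).Quotient)

end SepGraph


/-! ### Auxiliary development -/

open Finsupp

section MLeLemmas

variable {N : Type} [AddCommMonoid N]

theorem mle_refl (x : N) : MLe x x := ⟨0, add_zero x⟩

theorem mle_trans {x y z : N} (h1 : MLe x y) (h2 : MLe y z) : MLe x z := by
  obtain ⟨a, ha⟩ := h1; obtain ⟨b, hb⟩ := h2
  exact ⟨a + b, by rw [← add_assoc, ha, hb]⟩

theorem mle_add_left {x y : N} (z : N) (h : MLe x y) : MLe (z + x) (z + y) := by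
  obtain ⟨a, ha⟩ := h; exact ⟨a, by rw [add_assoc, ha]⟩

theorem mle_add_right {x y : N} (z : N) (h : MLe x y) : MLe (x + z) (y + z) := by
  rw [add_comm x z, add_comm y z]; exact mle_add_left z h

theorem mle_add_self (x z : N) : MLe x (x + z) := ⟨z, rfl⟩

end MLeLemmas

namespace SepGraph

variable {G : SepGraph} (A : G.AdaptableStructure)

theorem reach_refl (v : G.V) : G.Reach v v := Relation.ReflTransGen.refl

theorem reach_trans {u v w : G.V} (h1 : G.Reach u v) (h2 : G.Reach v w) : G.Reach u w :=
  Relation.ReflTransGen.trans h1 h2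

theorem vequiv_refl (v : G.V) : G.VEquiv v v := ⟨reach_refl v, reach_refl v⟩

theorem vequiv_symm {v w : G.V} (h : G.VEquiv v w) : G.VEquiv w v := ⟨h.2, h.1⟩

theorem vequiv_equivalence : Equivalence G.VEquiv :=
  ⟨fun v => vequiv_refl v, fun h => vequiv_symm h,
   fun h1 h2 => ⟨reach_trans h1.1 h2.1, reach_trans h2.2 h1.2⟩⟩

theorem mk_eq_mk {v w : G.V} : Quot.mk G.VEquiv v = Quot.mk G.VEquiv w ↔ G.VEquiv v w := by
  rw [Quot.eq]
  exact (vequiv_equivalence (G := G)).eqvGen_iff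

theorem mk'_eq_mk'_iff {M : Type} [AddCommMonoid M] (c : AddCon M) {a b : M} :
    c.mk' a = c.mk' b ↔ c a b :=
  c.eq

theorem gen_eq_sum {v : G.V} {X : Finset G.Ed} (hX : X ∈ G.C v) :
    G.gen v = ∑ e ∈ X, G.gen (G.r e) := by
  have h : G.mCon (G.vert v) (G.rX X) := AddConGen.Rel.of _ _ ⟨v, X, hX, rfl, rfl⟩
  have h2 : G.gen v = G.mCon.mk' (G.rX X) := (mk'_eq_mk'_iff G.mCon).mpr h
  rw [h2, rX, map_sum]
  rfl

theorem edge_mle {v w : G.V} (h : G.Edge v w) : MLe (G.gen w) (G.gen v) := by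
  classical
  obtain ⟨e, hs, hr⟩ := h
  obtain ⟨X, hX, heX⟩ := G.c_cover e
  rw [hs] at hX
  rw [gen_eq_sum hX, ← Finset.add_sum_erase X _ heX, hr]
  exact mle_add_self _ _

theorem reach_mle {v w : G.V} (h : G.Reach v w) : MLe (G.gen w) (G.gen v) := by
  induction h with
  | refl => exact mle_refl _
  | tail _ he ih => exact mle_trans (edge_mle he) ih

/-- The unique member of `C w` for a regular vertex contains every edge leaving `w`. -/
theorem reg_mem_X {w : G.V} (hw : ¬ A.free w) {X : Finset G.Ed} (hX : X ∈ G.C w)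
    {e : G.Ed} (he : G.s e = w) : e ∈ X := by
  obtain ⟨Y, hY, heY⟩ := G.c_cover e
  rw [he] at hY
  obtain ⟨X', _, huniq⟩ := A.reg_unique_C w hw
  have hYX : Y = X := by rw [huniq Y hY, huniq X hX]
  exact hYX ▸ heY

/-- Regular vertices absorb themselves: `a_w + a_w ≤ a_w`. -/
theorem reg_absorb_self {w : G.V} (hw : ¬ A.free w) :
    MLe (G.gen w + G.gen w) (G.gen w) := by
  classical
  obtain ⟨e₁, e₂, hne, hs₁, hs₂, hq₁, hq₂⟩ := A.reg_two_edges w hw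
  obtain ⟨X, hX, _⟩ := G.c_cover e₁
  rw [hs₁] at hX
  have h₁ : e₁ ∈ X := reg_mem_X A hw hX hs₁
  have h₂ : e₂ ∈ X := reg_mem_X A hw hX hs₂
  have h₂' : e₂ ∈ X.erase e₁ := Finset.mem_erase.mpr ⟨hne.symm, h₂⟩
  have hsum : G.gen w = G.gen (G.r e₁) + (G.gen (G.r e₂) +
      ∑ e ∈ (X.erase e₁).erase e₂, G.gen (G.r e)) := by
    rw [gen_eq_sum hX, ← Finset.add_sum_erase X _ h₁, ← Finset.add_sum_erase _ _ h₂']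
  have k₁ : MLe (G.gen w) (G.gen (G.r e₁)) := reach_mle hq₁.1
  have k₂ : MLe (G.gen w) (G.gen (G.r e₂)) := reach_mle hq₂.1
  have key : MLe (G.gen w + G.gen w) (G.gen (G.r e₁) + (G.gen (G.r e₂) +
      ∑ e ∈ (X.erase e₁).erase e₂, G.gen (G.r e))) :=
    mle_trans (mle_add_right _ k₁) (mle_add_left _ (mle_trans k₂ (mle_add_self _ _)))
  rw [← hsum] at key
  exact key

/-- A free vertex absorbs the target of any non-loop edge in a member of `C`. -/
theorem free_absorb_edge {w : G.V} (hw : A.free w) {X : Finset G.Ed} (hX : X ∈ G.C w)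
    {e : G.Ed} (he : e ∈ X) (hr : G.r e ≠ w) :
    MLe (G.gen w + G.gen (G.r e)) (G.gen w) := by
  classical
  obtain ⟨α, ⟨hαX, hαr⟩, hαuniq⟩ := A.free_loop w hw X hX
  have heα : e ∈ X.erase α := Finset.mem_erase.mpr ⟨fun h => hr (h ▸ hαr), he⟩
  have hsum : G.gen w = G.gen w + (G.gen (G.r e) +
      ∑ f ∈ (X.erase α).erase e, G.gen (G.r f)) := by
    conv_lhs => rw [gen_eq_sum hX]
    rw [← Finset.add_sum_erase _ _ hαX, hαr, ← Finset.add_sum_erase _ _ heα]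
  have key : MLe (G.gen w + G.gen (G.r e))
      (G.gen w + (G.gen (G.r e) + ∑ f ∈ (X.erase α).erase e, G.gen (G.r f))) :=
    mle_add_left _ (mle_add_self _ _)
  rw [← hsum] at key
  exact key

include A in
/-- Key absorption lemma: if `[v] < [w]` then `a_w + a_v ≤ a_w` in `M(E,C)`. -/
theorem vlt_absorb {v w : G.V} (h : G.VLt v w) :
    MLe (G.gen w + G.gen v) (G.gen w) := by
  obtain ⟨hreach, hnot⟩ := h
  induction hreach using Relation.ReflTransGen.head_induction_on with
  | refl => exact absurd (reach_refl v) hnot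
  | @head w u hedge htail ih =>
    by_cases hfw : A.free w
    · by_cases hequ : G.VEquiv u w
      · have : u = w := A.free_singleton w hfw u hequ
        subst this
        exact ih hnot
      · obtain ⟨e, hs, hr⟩ := hedge
        obtain ⟨X, hX, heX⟩ := G.c_cover e
        rw [hs] at hX
        have hru : G.r e ≠ w := by
          intro hh
          exact hequ (hr ▸ hh ▸ vequiv_refl w)
        have h1 : MLe (G.gen w + G.gen u) (G.gen w) := hr ▸ free_absorb_edge A hfw hX heX hru
        exact mle_trans (mle_add_left _ (reach_mle htail)) h1
    · have hv : MLe (G.gen v) (G.gen w) :=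
        reach_mle (reach_trans (Relation.ReflTransGen.head hedge htail) (reach_refl v))
      exact mle_trans (mle_add_left _ hv) (reg_absorb_self A hfw)

/-- Vertices in the same class have mutually equivalent generators. -/
theorem vequiv_mcon {v w : G.V} (h : G.VEquiv v w) :
    (mutualCon G.M) (G.gen v) (G.gen w) :=
  ⟨reach_mle h.2, reach_mle h.1⟩

/-- Absorption for the `p = q ∈ I_reg` case. -/
theorem equiv_absorb {v w : G.V} (hv : ¬ A.free v) (h : G.VEquiv v w) :
    MLe (G.gen w + G.gen v) (G.gen w) := by
  have hw : ¬ A.free w := fun hh => hv ((A.free_respects v w h).mpr hh)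
  exact mle_trans (mle_add_left _ (reach_mle h.2)) (reg_absorb_self A hw)

/-! ### The strict order and freeness on `Idx`, and the normal form on `Idx →₀ ℕ` -/

/-- The strict order on `I` induced by `VLt`. -/
def ILt (p q : G.Idx) : Prop :=
  ∃ v w : G.V, p = Quot.mk G.VEquiv v ∧ q = Quot.mk G.VEquiv w ∧ G.VLt v w

/-- Freeness of a class. -/
def IFr (A : G.AdaptableStructure) (p : G.Idx) : Prop :=
  ∃ v : G.V, p = Quot.mk G.VEquiv v ∧ A.free v

theorem vlt_congr {v v' w w' : G.V} (hv : G.VEquiv v v') (hw : G.VEquiv w w')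
    (h : G.VLt v' w') : G.VLt v w :=
  ⟨reach_trans hw.1 (reach_trans h.1 hv.2),
   fun hr => h.2 (reach_trans hv.2 (reach_trans hr hw.1))⟩

theorem ilt_iff {v w : G.V} :
    ILt (Quot.mk G.VEquiv v) (Quot.mk G.VEquiv w) ↔ G.VLt v w := by
  constructor
  · rintro ⟨v', w', hv, hw, h⟩
    exact vlt_congr (mk_eq_mk.mp hv) (mk_eq_mk.mp hw) h
  · intro h
    exact ⟨v, w, rfl, rfl, h⟩

theorem ilt_trans {p q r : G.Idx} (h1 : ILt p q) (h2 : ILt q r) : ILt p r := by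
  obtain ⟨v, w, rfl, rfl, hvw⟩ := h1
  obtain ⟨w', u, hq, rfl, hwu⟩ := h2
  have hww' : G.VEquiv w w' := mk_eq_mk.mp hq
  refine ⟨v, u, rfl, rfl, ⟨reach_trans hwu.1 (reach_trans hww'.2 hvw.1), fun hr => ?_⟩⟩
  exact hvw.2 (reach_trans hr (reach_trans hwu.1 hww'.2))

theorem ilt_irrefl (p : G.Idx) : ¬ ILt p p := by
  rintro ⟨v, w, rfl, hq, h⟩
  exact h.2 (mk_eq_mk.mp hq).1

theorem ifr_mk {v : G.V} : IFr A (Quot.mk G.VEquiv v) ↔ A.free v := by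
  constructor
  · rintro ⟨v', hv, hf⟩
    exact (A.free_respects v v' (mk_eq_mk.mp hv)).mpr hf
  · intro h
    exact ⟨v, rfl, h⟩

theorem tri_of_ilt {p q : G.Idx} (h : ILt p q) : G.tri A p q := by
  obtain ⟨v, w, hp, hq, hvw⟩ := h
  exact ⟨v, w, hp, hq, Or.inl hvw⟩

theorem tri_reg {p : G.Idx} (h : ¬ IFr A p) : G.tri A p p := by
  obtain ⟨v, rfl⟩ := Quot.exists_rep p
  have hnf : ¬ A.free v := fun hf => h ⟨v, rfl, hf⟩
  exact ⟨v, v, rfl, rfl, Or.inr ⟨vequiv_refl v, hnf⟩⟩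

theorem tri_cases {p q : G.Idx} (h : G.tri A p q) :
    ILt p q ∨ (p = q ∧ ¬ IFr A p) := by
  obtain ⟨v, w, rfl, rfl, h⟩ := h
  rcases h with h | ⟨heq, hnf⟩
  · exact Or.inl ⟨v, w, rfl, rfl, h⟩
  · exact Or.inr ⟨Quot.sound heq, fun hf => hnf ((ifr_mk A).mp hf)⟩

/-- `p` lies strictly below the support of `a`. -/
def Above (a : G.Idx →₀ ℕ) (p : G.Idx) : Prop := ∃ q : G.Idx, a q ≠ 0 ∧ ILt p q

/-- `p` lies in the downward closure of the support of `a`. -/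
def InD (a : G.Idx →₀ ℕ) (p : G.Idx) : Prop := a p ≠ 0 ∨ Above a p

open Classical in
/-- The normal form of an element of the free monoid over `I`. -/
noncomputable def Nf (A : G.AdaptableStructure) (a : G.Idx →₀ ℕ) (p : G.Idx) : ℕ :=
  if Above a p then 1
  else if a p ≠ 0 then (if IFr A p then a p else 1) else 0

theorem above_add {a b : G.Idx →₀ ℕ} {p : G.Idx} :
    Above (a + b) p ↔ Above a p ∨ Above b p := by
  constructor
  · rintro ⟨q, hq, hlt⟩
    rw [Finsupp.add_apply] at hq
    rcases Nat.eq_zero_or_pos (a q) with h | h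
    · exact Or.inr ⟨q, by omega, hlt⟩
    · exact Or.inl ⟨q, by omega, hlt⟩
  · rintro (⟨q, hq, hlt⟩ | ⟨q, hq, hlt⟩) <;>
      exact ⟨q, by rw [Finsupp.add_apply]; omega, hlt⟩

theorem nf_ne_zero {a : G.Idx →₀ ℕ} {p : G.Idx} : Nf A a p ≠ 0 ↔ InD a p := by
  unfold Nf
  by_cases hA : Above a p
  · simp only [if_pos hA]
    exact ⟨fun _ => Or.inr hA, fun _ => one_ne_zero⟩
  · simp only [if_neg hA]
    by_cases hm : a p ≠ 0
    · simp only [if_pos hm]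
      constructor
      · intro _; exact Or.inl hm
      · intro _; by_cases hf : IFr A p
        · simpa [if_pos hf] using hm
        · simp [if_neg hf]
    · simp only [if_neg hm, InD]
      push_neg at hm
      constructor
      · intro h; exact absurd rfl h
      · rintro (h | h)
        · exact absurd hm h
        · exact absurd h hA

theorem above_iff_exists {a : G.Idx →₀ ℕ} {p : G.Idx} :
    Above a p ↔ ∃ q : G.Idx, ILt p q ∧ InD a q := by
  constructor
  · rintro ⟨q, hq, hlt⟩
    exact ⟨q, hlt, Or.inl hq⟩
  · rintro ⟨q, hlt, hq | ⟨q', hq', hlt'⟩⟩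
    · exact ⟨q, hq, hlt⟩
    · exact ⟨q', hq', ilt_trans hlt hlt'⟩

theorem ind_of_nf_eq {a b : G.Idx →₀ ℕ} (h : Nf A a = Nf A b) {p : G.Idx} :
    InD a p ↔ InD b p := by
  rw [← nf_ne_zero (A := A), ← nf_ne_zero (A := A), h]

theorem above_of_nf_eq {a b : G.Idx →₀ ℕ} (h : Nf A a = Nf A b) {p : G.Idx} :
    Above a p ↔ Above b p := by
  rw [above_iff_exists, above_iff_exists]
  exact exists_congr fun q => and_congr_right fun _ => ind_of_nf_eq A h

theorem nf_apply_of_not_above_free {a : G.Idx →₀ ℕ} {p : G.Idx}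
    (hA : ¬ Above a p) (hf : IFr A p) : Nf A a p = a p := by
  unfold Nf
  rw [if_neg hA]
  by_cases hm : a p ≠ 0
  · rw [if_pos hm, if_pos hf]
  · rw [if_neg hm]; push_neg at hm; omega

open Classical in
theorem nf_apply_of_not_above_reg {a : G.Idx →₀ ℕ} {p : G.Idx}
    (hA : ¬ Above a p) (hf : ¬ IFr A p) : Nf A a p = if a p = 0 then 0 else 1 := by
  unfold Nf
  rw [if_neg hA]
  by_cases hm : a p ≠ 0
  · rw [if_pos hm, if_neg hf, if_neg (by omega : ¬ a p = 0)]
  · rw [if_neg hm]; push_neg at hm; rw [if_pos hm]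

theorem nf_apply_of_above {a : G.Idx →₀ ℕ} {p : G.Idx} (hA : Above a p) :
    Nf A a p = 1 := by
  unfold Nf; rw [if_pos hA]

/-- Pointwise congruence: the normal form only depends on `Above` and the value. -/
theorem nf_congr_pt {a b : G.Idx →₀ ℕ} {p : G.Idx}
    (h1 : Above a p ↔ Above b p) (h2 : a p = b p) : Nf A a p = Nf A b p := by
  by_cases hA : Above a p
  · rw [nf_apply_of_above A hA, nf_apply_of_above A (h1.mp hA)]
  · have hB : ¬ Above b p := fun hh => hA (h1.mpr hh)
    by_cases hf : IFr A p
    · rw [nf_apply_of_not_above_free A hA hf, nf_apply_of_not_above_free A hB hf, h2]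
    · rw [nf_apply_of_not_above_reg A hA hf, nf_apply_of_not_above_reg A hB hf, h2]

theorem nf_add_congr {a b : G.Idx →₀ ℕ} (h : Nf A a = Nf A b) (c : G.Idx →₀ ℕ) :
    Nf A (a + c) = Nf A (b + c) := by
  funext p
  by_cases hA : Above (a + c) p
  · have hB : Above (b + c) p := by
      rw [above_add] at hA ⊢
      rcases hA with hA | hA
      · exact Or.inl ((above_of_nf_eq A h).mp hA)
      · exact Or.inr hA
    rw [nf_apply_of_above A hA, nf_apply_of_above A hB]
  · have haa : ¬ Above a p := fun hh => hA (above_add.mpr (Or.inl hh))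
    have hac : ¬ Above c p := fun hh => hA (above_add.mpr (Or.inr hh))
    have hbb : ¬ Above b p := fun hh => haa ((above_of_nf_eq A h).mpr hh)
    have hB : ¬ Above (b + c) p := by
      rw [above_add]; rintro (hh | hh); exacts [hbb hh, hac hh]
    by_cases hf : IFr A p
    · have hva : a p = Nf A a p := (nf_apply_of_not_above_free A haa hf).symm
      have hvb : b p = Nf A b p := (nf_apply_of_not_above_free A hbb hf).symm
      rw [nf_apply_of_not_above_free A hA hf, nf_apply_of_not_above_free A hB hf,
        Finsupp.add_apply, Finsupp.add_apply, hva, hvb, h]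
    · have hva := nf_apply_of_not_above_reg A haa hf
      have hvb := nf_apply_of_not_above_reg A hbb hf
      have hiff : a p = 0 ↔ b p = 0 := by
        rw [h] at hva
        have hcomb := hva.symm.trans hvb
        by_cases h0 : a p = 0 <;> by_cases h0' : b p = 0
        · exact iff_of_true h0 h0'
        · rw [if_pos h0, if_neg h0'] at hcomb; exact absurd hcomb (by norm_num)
        · rw [if_neg h0, if_pos h0'] at hcomb; exact absurd hcomb (by norm_num)
        · exact iff_of_false h0 h0'
      rw [nf_apply_of_not_above_reg A hA hf, nf_apply_of_not_above_reg A hB hf,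
        Finsupp.add_apply, Finsupp.add_apply]
      by_cases h0 : a p = 0
      · rw [h0, hiff.mp h0]
      · have h0' : b p ≠ 0 := fun hh => h0 (hiff.mpr hh)
        rw [if_neg (by omega : ¬ a p + c p = 0),
          if_neg (by omega : ¬ b p + c p = 0)]

/-- The normal form is invariant under the generating relations of `triCon`. -/
theorem nf_gen {p q : G.Idx} (h : G.tri A p q) :
    Nf A (Finsupp.single q 1) = Nf A (Finsupp.single q 1 + Finsupp.single p 1) := by
  set a : G.Idx →₀ ℕ := Finsupp.single q 1 with ha
  set b : G.Idx →₀ ℕ := Finsupp.single q 1 + Finsupp.single p 1 with hb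
  have haq : a q = 1 := Finsupp.single_eq_same
  have hax : ∀ x : G.Idx, x ≠ q → a x = 0 := fun x hx =>
    Finsupp.single_eq_of_ne' (fun hc => hx hc.symm)
  have hsp : ∀ x : G.Idx, x ≠ p → (Finsupp.single p 1 : G.Idx →₀ ℕ) x = 0 := fun x hx =>
    Finsupp.single_eq_of_ne' (fun hc => hx hc.symm)
  have hbval : ∀ x : G.Idx, b x = a x + (Finsupp.single p 1 : G.Idx →₀ ℕ) x := fun x => by
    rw [hb, Finsupp.add_apply]
  have habove : ∀ x : G.Idx, Above a x ↔ ILt x q := by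
    intro x
    constructor
    · rintro ⟨y, hy, hlt⟩
      by_cases hyq : y = q
      · exact hyq ▸ hlt
      · exact absurd (hax y hyq) hy
    · intro hlt
      exact ⟨q, by rw [haq]; exact one_ne_zero, hlt⟩
  have hbabove : ∀ x : G.Idx, Above b x ↔ ILt x q := by
    intro x
    constructor
    · rintro ⟨y, hy, hlt⟩
      by_cases hyq : y = q
      · exact hyq ▸ hlt
      · by_cases hyp : y = p
        · subst hyp
          rcases tri_cases A h with hipq | ⟨rfl, _⟩
          · exact ilt_trans hlt hipq
          · exact absurd rfl hyq
        · rw [hbval y, hax y hyq, hsp y hyp] at hy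
          exact absurd rfl hy
    · intro hlt
      refine ⟨q, ?_, hlt⟩
      rw [hbval q, haq]
      omega
  funext x
  by_cases hx : ILt x q
  · rw [nf_apply_of_above A ((habove x).mpr hx), nf_apply_of_above A ((hbabove x).mpr hx)]
  · have hna : ¬ Above a x := fun hh => hx ((habove x).mp hh)
    have hnb : ¬ Above b x := fun hh => hx ((hbabove x).mp hh)
    rcases tri_cases A h with hipq | ⟨heq, hreg⟩
    · have hxp : x ≠ p := fun hh => hx (hh ▸ hipq)
      have hval : a x = b x := by rw [hbval x, hsp x hxp, add_zero]
      exact nf_congr_pt A ((habove x).trans (hbabove x).symm) hval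
    · by_cases hxq : x = q
      · have hb2 : b x = 2 := by
          rw [hbval x, hxq, haq, heq, Finsupp.single_eq_same]
        have ha1 : a x = 1 := by rw [hxq, haq]
        have hregx : ¬ IFr A x := by rw [hxq, ← heq]; exact hreg
        rw [nf_apply_of_not_above_reg A hna hregx, nf_apply_of_not_above_reg A hnb hregx,
          ha1, hb2]
        norm_num
      · have hxp : x ≠ p := fun hh => hxq (hh.trans heq)
        have hval : a x = b x := by rw [hbval x, hsp x hxp, add_zero]
        exact nf_congr_pt A ((habove x).trans (hbabove x).symm) hval

/-- The normal form is invariant under `triCon`. -/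
theorem nf_of_triCon {a b : G.Idx →₀ ℕ} (h : G.triCon A a b) : Nf A a = Nf A b := by
  let K : AddCon (G.Idx →₀ ℕ) :=
    { r := fun a b => Nf A a = Nf A b
      iseqv := ⟨fun _ => rfl, Eq.symm, Eq.trans⟩
      add' := by
        intro w x y z h1 h2
        calc Nf A (w + y) = Nf A (x + y) := nf_add_congr A h1 y
          _ = Nf A (y + x) := by rw [add_comm]
          _ = Nf A (z + x) := nf_add_congr A h2 x
          _ = Nf A (x + z) := by rw [add_comm] }
  have hle : G.triCon A ≤ K := by
    apply AddCon.addConGen_le.mpr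
    rintro a b ⟨p, q, htri, rfl, rfl⟩
    exact nf_gen A htri
  exact hle h

/-! ### Admissible additions and antisymmetry of `M(I,◁)` -/

/-- `p` may be freely added to `a`. -/
def Adm (A : G.AdaptableStructure) (a : G.Idx →₀ ℕ) (p : G.Idx) : Prop :=
  Above a p ∨ (¬ IFr A p ∧ a p ≠ 0)

theorem adm_mono {a c : G.Idx →₀ ℕ} {p : G.Idx} (h : Adm A a p) : Adm A (a + c) p := by
  rcases h with h | ⟨hf, hm⟩
  · exact Or.inl (above_add.mpr (Or.inl h))
  · exact Or.inr ⟨hf, by rw [Finsupp.add_apply]; omega⟩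

theorem adm_single_step {a : G.Idx →₀ ℕ} {p : G.Idx} (h : Adm A a p) :
    G.triCon A a (a + Finsupp.single p 1) := by
  -- produce `q` with `a q ≠ 0` and `tri p q`
  obtain ⟨q, hq, htri⟩ : ∃ q : G.Idx, a q ≠ 0 ∧ G.tri A p q := by
    rcases h with ⟨q, hq, hlt⟩ | ⟨hf, hm⟩
    · exact ⟨q, hq, tri_of_ilt A hlt⟩
    · exact ⟨p, hm, tri_reg A hf⟩
  have hdecomp : a = Finsupp.single q 1 + (Finsupp.single q (a q - 1) + a.erase q) := by
    rw [← add_assoc, ← Finsupp.single_add]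
    rw [(by omega : 1 + (a q - 1) = a q)]
    rw [Finsupp.single_add_erase]
  have h0 : G.triCon A (Finsupp.single q 1) (Finsupp.single q 1 + Finsupp.single p 1) :=
    AddConGen.Rel.of _ _ ⟨p, q, htri, rfl, rfl⟩
  have h1 := (G.triCon A).add h0 ((G.triCon A).refl (Finsupp.single q (a q - 1) + a.erase q))
  have e1 : Finsupp.single q 1 + (Finsupp.single q (a q - 1) + a.erase q) = a := hdecomp.symm
  have e2 : Finsupp.single q 1 + Finsupp.single p 1 +
      (Finsupp.single q (a q - 1) + a.erase q) = a + Finsupp.single p 1 := by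
    conv_rhs => rw [hdecomp]
    abel
  rw [e1, e2] at h1
  exact h1

theorem adm_single {a : G.Idx →₀ ℕ} {p : G.Idx} (h : Adm A a p) (n : ℕ) :
    G.triCon A a (a + Finsupp.single p n) := by
  induction n with
  | zero => rw [Finsupp.single_zero, add_zero]; exact (G.triCon A).refl a
  | succ n ih =>
    have step := adm_single_step A (adm_mono A (c := Finsupp.single p n) h)
    have : a + Finsupp.single p n + Finsupp.single p 1 = a + Finsupp.single p (n + 1) := by
      rw [add_assoc, ← Finsupp.single_add]
    rw [this] at step
    exact (G.triCon A).trans ih step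

theorem adm_add {c : G.Idx →₀ ℕ} :
    ∀ a : G.Idx →₀ ℕ, (∀ p : G.Idx, c p ≠ 0 → Adm A a p) → G.triCon A a (a + c) := by
  induction c using Finsupp.induction with
  | zero => intro a _; rw [add_zero]; exact (G.triCon A).refl a
  | single_add q n f hqf hn ih =>
    intro a h
    have hq : Adm A a q := h q (by rw [Finsupp.add_apply, Finsupp.single_eq_same]; omega)
    have step1 : G.triCon A a (a + Finsupp.single q n) := adm_single A hq n
    have step2 : G.triCon A (a + Finsupp.single q n)
        (a + Finsupp.single q n + f) := by
      apply ih
      intro p hp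
      have : (Finsupp.single q n + f) p ≠ 0 := by
        rw [Finsupp.add_apply]; omega
      exact adm_mono A (h p this)
    have : a + Finsupp.single q n + f = a + (Finsupp.single q n + f) := by rw [add_assoc]
    rw [this] at step2
    exact (G.triCon A).trans step1 step2

/-- Antisymmetry at the level of `triCon`. -/
theorem tri_antisymm {a b c d : G.Idx →₀ ℕ}
    (h1 : G.triCon A (a + c) b) (h2 : G.triCon A (b + d) a) : G.triCon A a b := by
  have n1 : Nf A (a + c) = Nf A b := nf_of_triCon A h1
  have n2 : Nf A (b + d) = Nf A a := nf_of_triCon A h2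
  -- transfer of downward closures
  have hInD : ∀ q : G.Idx, InD c q → InD a q := by
    intro q hq
    have t1 : InD (a + c) q := by
      rcases hq with hq | hq
      · exact Or.inl (by rw [Finsupp.add_apply]; omega)
      · exact Or.inr (above_add.mpr (Or.inr hq))
    have t2 : InD b q := (ind_of_nf_eq A n1).mp t1
    have t3 : InD (b + d) q := by
      rcases t2 with hh | hh
      · exact Or.inl (by rw [Finsupp.add_apply]; omega)
      · exact Or.inr (above_add.mpr (Or.inl hh))
    exact (ind_of_nf_eq A n2).mp t3
  have hInDd : ∀ q : G.Idx, InD d q → InD a q := by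
    intro q hq
    have t3 : InD (b + d) q := by
      rcases hq with hq | hq
      · exact Or.inl (by rw [Finsupp.add_apply]; omega)
      · exact Or.inr (above_add.mpr (Or.inr hq))
    exact (ind_of_nf_eq A n2).mp t3
  have key : ∀ p : G.Idx, c p ≠ 0 → Adm A a p := by
    intro p hc
    have hIa : InD a p := hInD p (Or.inl hc)
    -- helper : InD a q and ILt p q imply Above a p
    have habove_of : ∀ q : G.Idx, ILt p q → InD a q → Above a p := by
      rintro q hlt (hq | ⟨q', hq', hlt'⟩)
      · exact ⟨q, hq, hlt⟩
      · exact ⟨q', hq', ilt_trans hlt hlt'⟩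
    rcases hIa with hm | hab
    swap
    · exact Or.inl hab
    by_cases hf : IFr A p
    swap
    · exact Or.inr ⟨hf, hm⟩
    by_cases haa : Above a p
    · exact Or.inl haa
    exfalso
    -- the contradiction computation
    have hac : ¬ Above c p := by
      rintro ⟨q, hq, hlt⟩
      exact haa (habove_of q hlt (hInD q (Or.inl hq)))
    have had : ¬ Above d p := by
      rintro ⟨q, hq, hlt⟩
      exact haa (habove_of q hlt (hInDd q (Or.inl hq)))
    have hAac : ¬ Above (a + c) p := by
      rw [above_add]; rintro (hh | hh); exacts [haa hh, hac hh]
    have hAb : ¬ Above b p := fun hh => hAac ((above_of_nf_eq A n1).mpr hh)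
    have hAbd : ¬ Above (b + d) p := by
      rw [above_add]; rintro (hh | hh); exacts [hAb hh, had hh]
    have e1 : a p + c p = b p := by
      have := congrFun n1 p
      rw [nf_apply_of_not_above_free A hAac hf, nf_apply_of_not_above_free A hAb hf,
        Finsupp.add_apply] at this
      exact this
    have e2 : b p + d p = a p := by
      have := congrFun n2 p
      rw [nf_apply_of_not_above_free A hAbd hf, nf_apply_of_not_above_free A haa hf,
        Finsupp.add_apply] at this
      exact this
    omega
  exact (G.triCon A).trans (adm_add A a key) h1

/-- Antisymmetry of the algebraic pre-order on `M(I,◁)`. -/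
theorem midx_antisymm (x y : G.MIdx A) (h1 : MLe x y) (h2 : MLe y x) : x = y := by
  obtain ⟨a, rfl⟩ := AddCon.mk'_surjective x
  obtain ⟨b, rfl⟩ := AddCon.mk'_surjective y
  obtain ⟨z, hz⟩ := h1
  obtain ⟨w, hw⟩ := h2
  obtain ⟨cc, rfl⟩ := AddCon.mk'_surjective z
  obtain ⟨dd, rfl⟩ := AddCon.mk'_surjective w
  have hz' : (G.triCon A).mk' (a + cc) = (G.triCon A).mk' b := by
    rw [map_add]; exact hz
  have hw' : (G.triCon A).mk' (b + dd) = (G.triCon A).mk' a := by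
    rw [map_add]; exact hw
  exact (mk'_eq_mk'_iff (G.triCon A)).mpr
    (tri_antisymm A ((mk'_eq_mk'_iff (G.triCon A)).mp hz')
      ((mk'_eq_mk'_iff (G.triCon A)).mp hw'))

/-! ### The isomorphism -/

/-- The map `F → M(I,◁)`, `a_v ↦ [v]`. -/
noncomputable def phi1 : G.FreeM →+ (G.triCon A).Quotient :=
  ((G.triCon A).mk').comp (Finsupp.mapDomain.addMonoidHom (Quot.mk G.VEquiv))

theorem phi1_vert (v : G.V) :
    phi1 A (G.vert v) = (G.triCon A).mk' (Finsupp.single (Quot.mk G.VEquiv v) 1) := by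
  show (G.triCon A).mk' (Finsupp.mapDomain (Quot.mk G.VEquiv) (Finsupp.single v 1)) = _
  exact congrArg (G.triCon A).mk' Finsupp.mapDomain_single

theorem midx_absorb_sum {q : G.Idx} {β : Type} (S : Finset β) (t : β → G.Idx)
    (h : ∀ i ∈ S, G.tri A (t i) q) :
    (G.triCon A).mk' (Finsupp.single q 1 + ∑ i ∈ S, Finsupp.single (t i) 1) =
    (G.triCon A).mk' (Finsupp.single q 1) := by
  classical
  revert h
  refine Finset.induction_on S ?_ ?_
  · intro _
    rw [Finset.sum_empty, add_zero]
  · intro i S hni ih h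
    rw [Finset.sum_insert hni]
    have h0 : G.triCon A (Finsupp.single q 1)
        (Finsupp.single q 1 + Finsupp.single (t i) 1) :=
      AddConGen.Rel.of _ _ ⟨t i, q, h i (Finset.mem_insert_self i S), rfl, rfl⟩
    have h1 := (G.triCon A).add h0 ((G.triCon A).refl (∑ j ∈ S, Finsupp.single (t j) 1))
    have e : Finsupp.single q 1 + Finsupp.single (t i) 1 +
        ∑ j ∈ S, Finsupp.single (t j) 1 =
        Finsupp.single q 1 + (Finsupp.single (t i) 1 + ∑ j ∈ S, Finsupp.single (t j) 1) := by
      rw [add_assoc]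
    rw [e] at h1
    have h2 := (mk'_eq_mk'_iff (G.triCon A)).mpr h1
    rw [← h2]
    exact ih (fun j hj => h j (Finset.mem_insert_of_mem hj))

theorem rel_in_midx {v : G.V} {X : Finset G.Ed} (hX : X ∈ G.C v) :
    phi1 A (G.vert v) = phi1 A (G.rX X) := by
  classical
  have hsum : phi1 A (G.rX X) =
      (G.triCon A).mk' (∑ e ∈ X, Finsupp.single (Quot.mk G.VEquiv (G.r e)) 1) := by
    show (G.triCon A).mk' (Finsupp.mapDomain (Quot.mk G.VEquiv) (G.rX X)) = _
    rw [rX]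
    congr 1
    refine Finsupp.mapDomain_finset_sum.trans ?_
    exact Finset.sum_congr rfl fun e _ => Finsupp.mapDomain_single
  rw [phi1_vert, hsum]
  -- choose the distinguished edge `e₀ ∈ X` with `[r e₀] = [v]`
  obtain ⟨e₀, he₀X, he₀r, hother⟩ : ∃ e₀ ∈ X, Quot.mk G.VEquiv (G.r e₀) = Quot.mk G.VEquiv v ∧
      ∀ e ∈ X.erase e₀, G.tri A (Quot.mk G.VEquiv (G.r e)) (Quot.mk G.VEquiv v) := by
    by_cases hf : A.free v
    · obtain ⟨α, ⟨hαX, hαr⟩, hαuniq⟩ := A.free_loop v hf X hX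
      refine ⟨α, hαX, by rw [hαr], ?_⟩
      intro e he
      have heX := Finset.mem_of_mem_erase he
      have hne : e ≠ α := (Finset.mem_erase.mp he).1
      rcases A.free_targets v hf X hX e heX with hr | hlt
      · exact absurd (hαuniq e ⟨heX, hr⟩) hne
      · exact tri_of_ilt A (ilt_iff.mpr hlt)
    · obtain ⟨e₁, e₂, hne, hs₁, hs₂, hq₁, hq₂⟩ := A.reg_two_edges v hf
      refine ⟨e₁, reg_mem_X A hf hX hs₁, Quot.sound hq₁, ?_⟩
      intro e he
      have heX := Finset.mem_of_mem_erase he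
      have hse : G.s e = v := G.c_src v X hX e heX
      rcases A.reg_targets v hf e hse with heq | hlt
      · have hnfr : ¬ A.free (G.r e) := fun hh => hf ((A.free_respects (G.r e) v heq).mp hh)
        exact ⟨G.r e, v, rfl, rfl, Or.inr ⟨heq, hnfr⟩⟩
      · exact tri_of_ilt A (ilt_iff.mpr hlt)
  rw [← Finset.add_sum_erase X _ he₀X, he₀r]
  exact (midx_absorb_sum A (X.erase e₀) _ hother).symm

/-- `M(E,C) → M(I,◁)`. -/
noncomputable def phi2 : G.M →+ (G.triCon A).Quotient :=
  G.mCon.lift (phi1 A) (by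
    apply AddCon.addConGen_le.mpr
    rintro a b ⟨v, X, hX, rfl, rfl⟩
    exact (AddCon.ker_rel _).mpr (rel_in_midx A hX))

/-- The antisymmetrization of `M(E,C)` maps to `M(I,◁)`. -/
noncomputable def phi3 : (mutualCon G.M).Quotient →+ (G.triCon A).Quotient :=
  (mutualCon G.M).lift (phi2 A) (by
    rw [AddCon.le_def]
    rintro x y ⟨⟨z, hz⟩, ⟨w, hw⟩⟩
    refine (AddCon.ker_rel _).mpr (midx_antisymm A _ _ ?_ ?_)
    · exact ⟨phi2 A z, ((phi2 A).map_add x z).symm.trans (congrArg (phi2 A) hz)⟩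
    · exact ⟨phi2 A w, ((phi2 A).map_add y w).symm.trans (congrArg (phi2 A) hw)⟩)

theorem phi3_gen (v : G.V) :
    phi3 A ((mutualCon G.M).mk' (G.gen v)) = (G.triCon A).mk'
      (Finsupp.single (Quot.mk G.VEquiv v) 1) := by
  have h1 : phi3 A ((mutualCon G.M).mk' (G.gen v)) = phi2 A (G.gen v) :=
    AddCon.lift_mk' _ _
  have h2 : phi2 A (G.gen v) = phi1 A (G.vert v) := AddCon.lift_mk' _ _
  rw [h1, h2]
  exact phi1_vert A v

/-- The generator map `I → M(E,C)/≈`. -/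
noncomputable def gen' : G.Idx → (mutualCon G.M).Quotient :=
  Quot.lift (fun v => (mutualCon G.M).mk' (G.gen v))
    (fun v w h => (mk'_eq_mk'_iff _).mpr (vequiv_mcon h))

/-- The free part of the inverse map. -/
noncomputable def psi0 : (G.Idx →₀ ℕ) →+ (mutualCon G.M).Quotient :=
  Finsupp.liftAddHom fun p => multiplesHom _ (gen' (G := G) p)

theorem psi0_single (p : G.Idx) : psi0 (G := G) (Finsupp.single p 1) = gen' p := by
  have h : psi0 (G := G) (Finsupp.single p 1) =
      multiplesHom _ (gen' (G := G) p) 1 := Finsupp.liftAddHom_apply_single _ _ _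
  rw [h, multiplesHom_apply, one_nsmul]

/-- `M(I,◁) → M(E,C)/≈`. -/
noncomputable def psi : (G.triCon A).Quotient →+ (mutualCon G.M).Quotient :=
  (G.triCon A).lift (psi0 (G := G)) (by
    apply AddCon.addConGen_le.mpr
    rintro a b ⟨p, q, htri, rfl, rfl⟩
    refine (AddCon.ker_rel _).mpr ?_
    rw [map_add, psi0_single, psi0_single]
    obtain ⟨v, w, rfl, rfl, hcase⟩ := htri
    show (mutualCon G.M).mk' (G.gen w) =
      (mutualCon G.M).mk' (G.gen w) + (mutualCon G.M).mk' (G.gen v)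
    rw [← map_add]
    refine ((mk'_eq_mk'_iff _).mpr ⟨mle_add_self _ _, ?_⟩)
    rcases hcase with hlt | ⟨heq, hnf⟩
    · exact vlt_absorb A hlt
    · exact equiv_absorb A hnf heq)

theorem psi_single (p : G.Idx) :
    psi A ((G.triCon A).mk' (Finsupp.single p 1)) = gen' p := by
  have h1 : psi A ((G.triCon A).mk' (Finsupp.single p 1)) =
      psi0 (G := G) (Finsupp.single p 1) := AddCon.lift_mk' _ _
  rw [h1]
  exact psi0_single p

include A in
theorem psi_phi3 (x : (mutualCon G.M).Quotient) : psi A (phi3 A x) = x := by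
  obtain ⟨m, rfl⟩ := AddCon.mk'_surjective x
  obtain ⟨a, rfl⟩ := AddCon.mk'_surjective m
  have hext : ((psi A).comp ((phi3 A).comp
      (((mutualCon G.M).mk').comp (G.mCon.mk')))) =
      ((mutualCon G.M).mk').comp (G.mCon.mk') := by
    apply Finsupp.addHom_ext
    intro v n
    have hsingle : (Finsupp.single v n : G.FreeM) = n • G.vert v := by
      rw [vert, Finsupp.smul_single, smul_eq_mul, mul_one]
    rw [hsingle, map_nsmul, map_nsmul]
    congr 1
    show psi A (phi3 A ((mutualCon G.M).mk' (G.gen v))) = (mutualCon G.M).mk' (G.gen v)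
    rw [phi3_gen]
    exact psi_single A _
  exact DFunLike.congr_fun hext a

theorem phi3_psi (y : (G.triCon A).Quotient) : phi3 A (psi A y) = y := by
  obtain ⟨a, rfl⟩ := AddCon.mk'_surjective y
  have hext : ((phi3 A).comp ((psi A).comp ((G.triCon A).mk'))) = (G.triCon A).mk' := by
    apply Finsupp.addHom_ext
    intro p n
    obtain ⟨v, rfl⟩ := Quot.exists_rep p
    have hsingle : (Finsupp.single (α := G.Idx) (Quot.mk G.VEquiv v) n : G.Idx →₀ ℕ) =
        n • Finsupp.single (α := G.Idx) (Quot.mk G.VEquiv v) 1 := by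
      exact (by rw [Finsupp.smul_single, smul_eq_mul, mul_one] : Finsupp.single (Quot.mk G.VEquiv v) n = n • Finsupp.single (Quot.mk G.VEquiv v) 1)
    rw [hsingle, map_nsmul, map_nsmul]
    congr 1
    show phi3 A (psi A ((G.triCon A).mk' (Finsupp.single (Quot.mk G.VEquiv v) 1))) = _
    rw [show psi A ((G.triCon A).mk' (Finsupp.single (Quot.mk G.VEquiv v) 1)) = gen' (Quot.mk G.VEquiv v) from psi_single A _]
    show phi3 A ((mutualCon G.M).mk' (G.gen v)) = _
    exact phi3_gen A v
  exact DFunLike.congr_fun hext a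

end SepGraph

/-- For an adaptable separated graph `(E,C)`, the antisymmetrization
of `M(E,C)` is isomorphic to `M(I,◁)` via the map sending the class of `a_v` to the
generator `[v]`. -/
theorem stmt9 (G : SepGraph) (A : G.AdaptableStructure) :
    ∃ φ : (mutualCon G.M).Quotient ≃+ G.MIdx A,
      ∀ v : G.V, φ ((mutualCon G.M).mk' (G.gen v)) =
        (G.triCon A).mk' (Finsupp.single (Quot.mk G.VEquiv v) 1) := by
  refine ⟨{ toFun := SepGraph.phi3 A, invFun := SepGraph.psi A,
            left_inv := SepGraph.psi_phi3 A, right_inv := SepGraph.phi3_psi A,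
            map_add' := (SepGraph.phi3 A).map_add }, ?_⟩
  intro v
  exact SepGraph.phi3_gen A v
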